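/- Let g and h be finite-dimensional real Lie algebras with norms and let φ : g → h be a Lie algebra homomorphism. Then the induced group homomorphism P(g) → P(h), γ ↦ φ∘γ, maps the subgroup P(g)₀ into the subgroup P(h)₀, and therefore descends to a group homomorphism P(g)/P(g)₀ → P(h)/P(h)₀. -/

import Mathlib

/-- `IsLieBracket B` says that the bilinear map `B = ⁅·,·⁆` makes the
(finite-dimensional, normed) real vector space `g` into a real Lie algebra:
it is alternating and satisfies the Jacobi identity (in Leibniz form). -/
def IsLieBracket {g : Type*} [NormedAddCommGroup g] [NormedSpace ℝ g]
    (B : g →ₗ[ℝ] g →ₗ[ℝ] g) : Prop :=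
  (∀ x : g, B x x = 0) ∧
  (∀ x y z : g, B x (B y z) = B (B x y) z + B y (B x z))

/-- The adjoint endomorphism `ad x = ⁅x, ·⁆` as a continuous linear map. -/
noncomputable def adL {g : Type*} [NormedAddCommGroup g] [NormedSpace ℝ g]
    [FiniteDimensional ℝ g] (B : g →ₗ[ℝ] g →ₗ[ℝ] g) (x : g) : g →L[ℝ] g :=
  LinearMap.toContinuousLinearMap (B x)

/-- `IsTransport B γ A` says that `A : [0,1] → End(g)` is a continuously
differentiable path of linear endomorphisms of `g` with `A 0 = id` and
`A' t = ad (γ t) ∘ A t` for `t ∈ [0,1]` (one-sided derivatives at the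
endpoints, and the derivative is continuous on `[0,1]`). -/
def IsTransport {g : Type*} [NormedAddCommGroup g] [NormedSpace ℝ g]
    [FiniteDimensional ℝ g] (B : g →ₗ[ℝ] g →ₗ[ℝ] g)
    (γ : ℝ → g) (A : ℝ → (g →L[ℝ] g)) : Prop :=
  A 0 = 1 ∧
  (∀ t ∈ Set.Icc (0:ℝ) 1,
    HasDerivWithinAt A ((adL B (γ t)).comp (A t)) (Set.Icc (0:ℝ) 1) t) ∧
  ContinuousOn (fun t => (adL B (γ t)).comp (A t)) (Set.Icc (0:ℝ) 1)

/-- The path `A_γ : [0,1] → End(g)`, i.e. the unique continuously differentiable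
solution of `A 0 = id`, `A' t = ad (γ t) ∘ A t` (chosen via choice; for a
continuous path `γ` it exists and is unique on `[0,1]`). -/
noncomputable def transport {g : Type*} [NormedAddCommGroup g] [NormedSpace ℝ g]
    [FiniteDimensional ℝ g] (B : g →ₗ[ℝ] g →ₗ[ℝ] g) (γ : ℝ → g) :
    ℝ → (g →L[ℝ] g) :=
  letI := Classical.propDecidable (∃ A : ℝ → (g →L[ℝ] g), IsTransport B γ A)
  if h : ∃ A : ℝ → (g →L[ℝ] g), IsTransport B γ A then h.choose else fun _ => 1

/-- Extension of a continuous path `[0,1] → g` to all of `ℝ` (constant outside `[0,1]`). -/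
noncomputable def pathExt {g : Type*} [TopologicalSpace g]
    (γ : C(Set.Icc (0:ℝ) 1, g)) : ℝ → g :=
  Set.IccExtend zero_le_one ⇑γ

/-- The Duistermaat–Kolk multiplication of paths: `(γ · δ)(t) = γ t + A_γ(t) (δ t)`,
as a `g`-valued function on `[0,1]`. -/
noncomputable def pathMul {g : Type*} [NormedAddCommGroup g] [NormedSpace ℝ g]
    [FiniteDimensional ℝ g] (B : g →ₗ[ℝ] g →ₗ[ℝ] g)
    (γ δ : C(Set.Icc (0:ℝ) 1, g)) : Set.Icc (0:ℝ) 1 → g :=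
  fun t => γ t + transport B (pathExt γ) t (δ t)

/-- The Duistermaat–Kolk inversion of paths: `ι(γ)(t) = -A_γ(t)⁻¹ (γ t)`,
as a `g`-valued function on `[0,1]`. -/
noncomputable def pathInv {g : Type*} [NormedAddCommGroup g] [NormedSpace ℝ g]
    [FiniteDimensional ℝ g] (B : g →ₗ[ℝ] g →ₗ[ℝ] g)
    (γ : C(Set.Icc (0:ℝ) 1, g)) : Set.Icc (0:ℝ) 1 → g :=
  fun t => -(Ring.inverse (transport B (pathExt γ) t) (γ t))

/-- `InPathZero B γ` says that `γ` belongs to the subset `P(g)₀` of the path group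
`P(g) = C([0,1], g)`: there is a continuously differentiable family
`Γ : [0,1] → P(g)` (with derivative `Γ'`) joining the constant path `0` to `γ`
such that `∫₀¹ A_{Γ s}(t)⁻¹ (Γ' s (t)) dt = 0` for all `s ∈ [0,1]`. -/
noncomputable def InPathZero {g : Type*} [NormedAddCommGroup g] [NormedSpace ℝ g]
    [FiniteDimensional ℝ g] (B : g →ₗ[ℝ] g →ₗ[ℝ] g)
    (γ : C(Set.Icc (0:ℝ) 1, g)) : Prop :=
  ∃ Γ Γ' : ℝ → C(Set.Icc (0:ℝ) 1, g),
    (∀ s ∈ Set.Icc (0:ℝ) 1, HasDerivWithinAt Γ (Γ' s) (Set.Icc (0:ℝ) 1) s) ∧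
    ContinuousOn Γ' (Set.Icc (0:ℝ) 1) ∧
    Γ 0 = 0 ∧ Γ 1 = γ ∧
    ∀ s ∈ Set.Icc (0:ℝ) 1,
      (∫ t in (0:ℝ)..1,
        Ring.inverse (transport B (pathExt (Γ s)) t) (pathExt (Γ' s) t)) = 0

/-- The coset relation of the subgroup `P(g)₀` on the path group
`P(g) = C([0,1], g)`: `γ ∼ δ` iff `γ · ι(δ) ∈ P(g)₀`. -/
noncomputable def pathRel {g : Type*} [NormedAddCommGroup g] [NormedSpace ℝ g]
    [FiniteDimensional ℝ g] (B : g →ₗ[ℝ] g →ₗ[ℝ] g)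
    (γ δ : C(Set.Icc (0:ℝ) 1, g)) : Prop :=
  ∃ ι m : C(Set.Icc (0:ℝ) 1, g),
    (∀ t, ι t = pathInv B δ t) ∧ (∀ t, m t = pathMul B γ ι t) ∧ InPathZero B m

/-- The map `P(g) → P(h)` induced by a linear map `φ : g → h`, `γ ↦ φ ∘ γ`. -/
noncomputable def pathMap {g h : Type*}
    [NormedAddCommGroup g] [NormedSpace ℝ g] [FiniteDimensional ℝ g]
    [NormedAddCommGroup h] [NormedSpace ℝ h] [FiniteDimensional ℝ h]
    (φ : g →ₗ[ℝ] h) (γ : C(Set.Icc (0:ℝ) 1, g)) : C(Set.Icc (0:ℝ) 1, h) :=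
  ContinuousMap.comp
    ⟨fun x => φ x, (LinearMap.toContinuousLinearMap φ).continuous⟩ γ



open Set

section Helpers

variable {F : Type*} [NormedAddCommGroup F] [NormedSpace ℝ F]

lemma myIciOfIcc {f : ℝ → F} {d : F} {a b t : ℝ} (ht : t ∈ Set.Ico a b)
    (h : HasDerivWithinAt f d (Set.Icc a b) t) : HasDerivWithinAt f d (Set.Ici t) t := by
  have h1 : HasDerivWithinAt f d (Set.Icc t b) t := h.mono (Set.Icc_subset_Icc_left ht.1)
  refine (hasDerivWithinAt_congr_set ?_).mp h1
  rw [Filter.eventuallyEq_set]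
  filter_upwards [Iio_mem_nhds ht.2] with x hx
  simp only [Set.mem_Icc, Set.mem_Ici]
  exact ⟨fun h => h.1, fun h => ⟨h, hx.le⟩⟩

section Exists

variable [CompleteSpace F]

lemma linODE_local (M : ℝ → F →L[ℝ] F) (hM : Continuous M) {K : ℝ} (hK0 : 0 ≤ K)
    (hK : ∀ t, ‖M t‖ ≤ K) {a b : ℝ} (hab : a ≤ b) (hsmall : K * (b - a) ≤ 1/2) (x₀ : F) :
    ∃ f : ℝ → F, f a = x₀ ∧
      ∀ t ∈ Set.Icc a b, HasDerivWithinAt f (M t (f t)) (Set.Icc a b) t := by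
  have hpl : IsPicardLindelof (fun t x => M t x) (⟨a, le_refl a, hab⟩ : Set.Icc a b) x₀
      (‖x₀‖ + 1).toNNReal 0 (K * (‖x₀‖ + (‖x₀‖ + 1))).toNNReal K.toNNReal := by
    refine ⟨fun t _ => ?_, fun x _ => ?_, fun t _ x hx => ?_, ?_⟩
    · refine ((M t).lipschitz.weaken ?_).lipschitzOnWith
      rw [← Real.toNNReal_coe (r := ‖M t‖₊)]
      exact Real.toNNReal_mono (by simpa using hK t)
    · exact (hM.clm_apply continuous_const).continuousOn
    · have hx' : ‖x - x₀‖ ≤ ‖x₀‖ + 1 := by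
        have := mem_closedBall_iff_norm.mp hx
        rwa [Real.coe_toNNReal _ (by positivity)] at this
      have h1 : ‖x‖ ≤ ‖x₀‖ + (‖x₀‖ + 1) := by
        have h2 : ‖x‖ ≤ ‖x - x₀‖ + ‖x₀‖ := by
          have h3 := norm_add_le (x - x₀) x₀
          rwa [sub_add_cancel] at h3
        linarith
      rw [Real.coe_toNNReal _ (by positivity)]
      calc ‖M t x‖ ≤ ‖M t‖ * ‖x‖ := (M t).le_opNorm x
        _ ≤ K * (‖x₀‖ + (‖x₀‖ + 1)) := by
            have := hK t
            nlinarith [norm_nonneg (M t), norm_nonneg x]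
    · have : max (b - a) (a - a) = b - a := by
        rw [sub_self]; exact max_eq_left (by linarith)
      simp only [this, NNReal.coe_zero, sub_zero, Real.coe_toNNReal _ (by positivity : (0:ℝ) ≤ K * (‖x₀‖ + (‖x₀‖ + 1))), Real.coe_toNNReal _ (by positivity : (0:ℝ) ≤ ‖x₀‖ + 1)]
      nlinarith [norm_nonneg x₀]
  obtain ⟨f, hf0, hf⟩ := hpl.exists_eq_forall_mem_Icc_hasDerivWithinAt₀
  exact ⟨f, hf0, hf⟩

lemma linODE_glue {M : ℝ → F →L[ℝ] F} {a c b : ℝ} (hac : a ≤ c) (hcb : c ≤ b)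
    {f₁ f₂ : ℝ → F}
    (h₁ : ∀ t ∈ Set.Icc a c, HasDerivWithinAt f₁ (M t (f₁ t)) (Set.Icc a c) t)
    (h₂ : ∀ t ∈ Set.Icc c b, HasDerivWithinAt f₂ (M t (f₂ t)) (Set.Icc c b) t)
    (hm : f₁ c = f₂ c) :
    ∃ f : ℝ → F, f a = f₁ a ∧
      ∀ t ∈ Set.Icc a b, HasDerivWithinAt f (M t (f t)) (Set.Icc a b) t := by
  classical
  set f : ℝ → F := fun t => if t ≤ c then f₁ t else f₂ t with hfdef
  have hE1 : ∀ x ∈ Set.Icc a c, f x = f₁ x := fun x hx => if_pos hx.2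
  have hE2 : ∀ x ∈ Set.Icc c b, f x = f₂ x := by
    intro x hx
    by_cases h : x ≤ c
    · have hxc : x = c := le_antisymm h hx.1
      simp [hfdef, hxc, hm]
    · exact if_neg h
  refine ⟨f, hE1 a ⟨le_refl a, hac⟩, fun t ht => ?_⟩
  rcases lt_trichotomy t c with hlt | heq | hgt
  · have hmem : Set.Icc a c ∈ nhdsWithin t (Set.Icc a b) :=
      mem_nhdsWithin.mpr ⟨Set.Iio c, isOpen_Iio, hlt, fun x hx => ⟨hx.2.1, hx.1.le⟩⟩
    have hd := (h₁ t ⟨ht.1, hlt.le⟩).mono_of_mem_nhdsWithin hmem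
    have heq' : f =ᶠ[nhdsWithin t (Set.Icc a b)] f₁ :=
      Filter.eventually_of_mem hmem (fun x hx => hE1 x hx)
    have hft : f t = f₁ t := hE1 t ⟨ht.1, hlt.le⟩
    rw [hft]
    exact hd.congr_of_eventuallyEq heq' hft
  · subst heq
    have hl : HasDerivWithinAt f (M t (f t)) (Set.Icc a t) t := by
      have := (h₁ t ⟨ht.1, le_refl t⟩).congr hE1 (hE1 t ⟨ht.1, le_refl t⟩)
      rwa [hE1 t ⟨ht.1, le_refl t⟩]
    have hr : HasDerivWithinAt f (M t (f t)) (Set.Icc t b) t := by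
      have hfc : f t = f₂ t := hE2 t ⟨le_refl t, ht.2⟩
      have := (h₂ t ⟨le_refl t, ht.2⟩).congr hE2 hfc
      rwa [hfc]
    have := hl.union hr
    rwa [Set.Icc_union_Icc_eq_Icc ht.1 ht.2] at this
  · have hmem : Set.Icc c b ∈ nhdsWithin t (Set.Icc a b) :=
      mem_nhdsWithin.mpr ⟨Set.Ioi c, isOpen_Ioi, hgt, fun x hx => ⟨hx.1.le, hx.2.2⟩⟩
    have hd := (h₂ t ⟨hgt.le, ht.2⟩).mono_of_mem_nhdsWithin hmem
    have heq' : f =ᶠ[nhdsWithin t (Set.Icc a b)] f₂ :=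
      Filter.eventually_of_mem hmem (fun x hx => hE2 x hx)
    have hft : f t = f₂ t := hE2 t ⟨hgt.le, ht.2⟩
    rw [hft]
    exact hd.congr_of_eventuallyEq heq' hft

lemma linODE_global (M : ℝ → F →L[ℝ] F) (hM : Continuous M) {K : ℝ} (hK0 : 0 ≤ K)
    (hK : ∀ t, ‖M t‖ ≤ K) :
    ∀ (n : ℕ) {a b : ℝ}, a ≤ b → K * (b - a) ≤ n / 2 → ∀ x₀ : F,
    ∃ f : ℝ → F, f a = x₀ ∧
      ∀ t ∈ Set.Icc a b, HasDerivWithinAt f (M t (f t)) (Set.Icc a b) t := by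
  intro n
  induction n with
  | zero =>
      intro a b hab hn x₀
      exact linODE_local M hM hK0 hK hab (by simpa using hn.trans (by norm_num)) x₀
  | succ n ih =>
      intro a b hab hn x₀
      by_cases hc : K * (b - a) ≤ 1/2
      · exact linODE_local M hM hK0 hK hab hc x₀
      · push_neg at hc
        have hKpos : 0 < K := by nlinarith
        obtain ⟨c, hcdef⟩ : ∃ c : ℝ, c = a + 1 / (2 * K) := ⟨_, rfl⟩
        have hd : 0 < 1 / (2 * K) := by positivity
        have hac : a ≤ c := by rw [hcdef]; linarith
        have hba : 1 / (2 * K) < b - a := by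
          rw [div_lt_iff₀ (by positivity)]
          nlinarith
        have hcb : c ≤ b := by rw [hcdef]; linarith
        have hca' : c - a = 1 / (2 * K) := by rw [hcdef]; ring
        have h12 : K * (1 / (2 * K)) = 1 / 2 := by field_simp
        have hsm1 : K * (c - a) ≤ 1 / 2 := by rw [hca', h12]
        obtain ⟨f₁, hf₁0, hf₁⟩ := linODE_local M hM hK0 hK hac hsm1 x₀
        have hsm2 : K * (b - c) ≤ n / 2 := by
          have hr : K * (b - c) = K * (b - a) - K * (c - a) := by ring
          rw [hr, hca', h12]
          push_cast at hn
          linarith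
        obtain ⟨f₂, hf₂0, hf₂⟩ := ih hcb hsm2 (f₁ c)
        obtain ⟨f, hf0, hf⟩ := linODE_glue hac hcb hf₁ hf₂ hf₂0.symm
        exact ⟨f, by rw [hf0, hf₁0], hf⟩

lemma linODE_exists01 (M : ℝ → F →L[ℝ] F) (hM : Continuous M) {K : ℝ}
    (hK : ∀ t, ‖M t‖ ≤ K) (x₀ : F) :
    ∃ f : ℝ → F, f 0 = x₀ ∧
      ∀ t ∈ Set.Icc (0:ℝ) 1, HasDerivWithinAt f (M t (f t)) (Set.Icc (0:ℝ) 1) t := by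
  set K' : ℝ := max K 0 with hK'def
  have hK'0 : 0 ≤ K' := le_max_right _ _
  have hK' : ∀ t, ‖M t‖ ≤ K' := fun t => (hK t).trans (le_max_left _ _)
  refine linODE_global M hM hK'0 hK' ⌈2 * K'⌉₊ zero_le_one ?_ x₀
  have h2 := Nat.le_ceil (2 * K')
  linarith

end Exists

lemma linODE_unique01 (M : ℝ → F →L[ℝ] F) {K : ℝ} (hK0 : 0 ≤ K) (hK : ∀ t, ‖M t‖ ≤ K)
    {f h : ℝ → F}
    (hf : ∀ t ∈ Set.Icc (0:ℝ) 1, HasDerivWithinAt f (M t (f t)) (Set.Icc (0:ℝ) 1) t)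
    (hh : ∀ t ∈ Set.Icc (0:ℝ) 1, HasDerivWithinAt h (M t (h t)) (Set.Icc (0:ℝ) 1) t)
    (h0 : f 0 = h 0) : Set.EqOn f h (Set.Icc (0:ℝ) 1) := by
  refine ODE_solution_unique (v := fun t x => M t x) (K := K.toNNReal) ?_
    (fun t ht => (hf t ht).continuousWithinAt) ?_
    (fun t ht => (hh t ht).continuousWithinAt) ?_ h0
  · intro t
    refine (M t).lipschitz.weaken ?_
    rw [← Real.toNNReal_coe (r := ‖M t‖₊)]
    exact Real.toNNReal_mono (by simpa using hK t)
  · exact fun t ht => myIciOfIcc ht (hf t (Set.Ico_subset_Icc_self ht))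
  · exact fun t ht => myIciOfIcc ht (hh t (Set.Ico_subset_Icc_self ht))

end Helpers

section Transport

open Set ContinuousLinearMap

variable {g : Type*} [NormedAddCommGroup g] [NormedSpace ℝ g] [FiniteDimensional ℝ g]

lemma continuous_adL (B : g →ₗ[ℝ] g →ₗ[ℝ] g) : Continuous (fun x : g => adL B x) :=
  (LinearMap.toContinuousLinearMap.toLinearMap.comp B).continuous_of_finiteDimensional

lemma continuous_pathExt (γ : C(Set.Icc (0:ℝ) 1, g)) : Continuous (pathExt γ) :=
  γ.continuous.Icc_extend'

lemma pathExt_bound {F' : Type*} [NormedAddCommGroup F'] (N : g → F') (hN : Continuous N)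
    (γ : C(Set.Icc (0:ℝ) 1, g)) : ∃ K : ℝ, ∀ t : ℝ, ‖N (pathExt γ t)‖ ≤ K := by
  obtain ⟨C, hC⟩ := IsCompact.exists_bound_of_continuousOn (isCompact_Icc (a := (0:ℝ)) (b := 1))
    ((hN.comp (continuous_pathExt γ)).continuousOn)
  refine ⟨C, fun t => ?_⟩
  have h2 := hC ↑(Set.projIcc 0 1 zero_le_one t) (Set.projIcc 0 1 zero_le_one t).2
  have h3 : pathExt γ ↑(Set.projIcc 0 1 zero_le_one t) = pathExt γ t :=
    congrArg (⇑γ) (Set.projIcc_val zero_le_one _)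
  simp only [Function.comp_apply] at h2
  rwa [h3] at h2

lemma isTransport_transport (B : g →ₗ[ℝ] g →ₗ[ℝ] g) (γ : C(Set.Icc (0:ℝ) 1, g)) :
    IsTransport B (pathExt γ) (transport B (pathExt γ)) := by
  have hMc : Continuous (fun t : ℝ => (ContinuousLinearMap.compL ℝ g g g) (adL B (pathExt γ t))) :=
    (ContinuousLinearMap.compL ℝ g g g).continuous.comp
      ((continuous_adL B).comp (continuous_pathExt γ))
  obtain ⟨K, hK⟩ := pathExt_bound (fun x => (ContinuousLinearMap.compL ℝ g g g) (adL B x))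
    ((ContinuousLinearMap.compL ℝ g g g).continuous.comp (continuous_adL B)) γ
  obtain ⟨f, hf0, hf⟩ := linODE_exists01 _ hMc hK 1
  have hder : ∀ t ∈ Set.Icc (0:ℝ) 1,
      HasDerivWithinAt f ((adL B (pathExt γ t)).comp (f t)) (Set.Icc (0:ℝ) 1) t := by
    intro t ht
    simpa using hf t ht
  have hfc : ContinuousOn f (Set.Icc (0:ℝ) 1) := fun t ht => (hder t ht).continuousWithinAt
  have hex : ∃ A, IsTransport B (pathExt γ) A := by
    refine ⟨f, hf0, hder, ?_⟩
    exact ContinuousOn.clm_comp ((continuous_adL B).comp (continuous_pathExt γ)).continuousOn hfc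
  have htr : transport B (pathExt γ) = hex.choose := by
    simp only [transport]
    rw [dif_pos hex]
  rw [htr]
  exact hex.choose_spec

lemma transport_inv (B : g →ₗ[ℝ] g →ₗ[ℝ] g) (γ : C(Set.Icc (0:ℝ) 1, g)) :
    ∃ C : ℝ → (g →L[ℝ] g),
      ContinuousOn C (Set.Icc (0:ℝ) 1) ∧
      ∀ t ∈ Set.Icc (0:ℝ) 1, (C t) * (transport B (pathExt γ) t) = 1 ∧
        (transport B (pathExt γ) t) * (C t) = 1 ∧
        Ring.inverse (transport B (pathExt γ) t) = C t := by
  have hA := isTransport_transport B γ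
  set A := transport B (pathExt γ) with hAdef
  have hMc : Continuous
      (fun t : ℝ => -((ContinuousLinearMap.compL ℝ g g g).flip (adL B (pathExt γ t)))) :=
    (((ContinuousLinearMap.compL ℝ g g g).flip.continuous.comp
      ((continuous_adL B).comp (continuous_pathExt γ)))).neg
  obtain ⟨K, hK⟩ := pathExt_bound
    (fun x => -((ContinuousLinearMap.compL ℝ g g g).flip (adL B x)))
    (((ContinuousLinearMap.compL ℝ g g g).flip.continuous.comp (continuous_adL B)).neg) γ
  obtain ⟨C, hC0, hC⟩ := linODE_exists01 _ hMc hK 1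
  have hCd : ∀ t ∈ Set.Icc (0:ℝ) 1,
      HasDerivWithinAt C (-((C t) * (adL B (pathExt γ t)))) (Set.Icc (0:ℝ) 1) t := by
    intro t ht
    simpa [ContinuousLinearMap.mul_def] using hC t ht
  have hCc : ContinuousOn C (Set.Icc (0:ℝ) 1) := fun t ht => (hCd t ht).continuousWithinAt
  have hprod : ∀ t ∈ Set.Icc (0:ℝ) 1, (C t) * (A t) = 1 := by
    have hd : ∀ t ∈ Set.Icc (0:ℝ) 1,
        HasDerivWithinAt (fun u => C u * A u) 0 (Set.Icc (0:ℝ) 1) t := by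
      intro t ht
      have hmul := (hCd t ht).mul (hA.2.1 t ht)
      have heq : -(C t * adL B (pathExt γ t)) * A t
          + C t * ((adL B (pathExt γ t)).comp (A t)) = 0 := by
        have h1 : (adL B (pathExt γ t)).comp (A t) = adL B (pathExt γ t) * A t := rfl
        rw [h1, neg_mul, ← mul_assoc, neg_add_cancel]
      rwa [heq] at hmul
    have hc : ContinuousOn (fun u => C u * A u) (Set.Icc (0:ℝ) 1) :=
      fun t ht => (hd t ht).continuousWithinAt
    intro t ht
    have hconst := constant_of_has_deriv_right_zero hc
      (fun x hx => myIciOfIcc hx (hd x (Set.Ico_subset_Icc_self hx))) t ht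
    have h0 : C 0 * A 0 = 1 := by rw [hC0, hA.1, one_mul]
    rw [hconst, h0]
  have hAC : ∀ t ∈ Set.Icc (0:ℝ) 1, (A t) * (C t) = 1 := by
    intro t ht
    have h1 := hprod t ht
    have h2 : ((C t : g →ₗ[ℝ] g)) * ((A t : g →ₗ[ℝ] g)) = 1 := by
      rw [Module.End.mul_eq_comp, ← ContinuousLinearMap.toLinearMap_comp, ← ContinuousLinearMap.mul_def,
        h1]
      rfl
    have h3 := mul_eq_one_comm.mp h2
    apply ContinuousLinearMap.coe_injective
    rw [ContinuousLinearMap.mul_def, ContinuousLinearMap.toLinearMap_comp, ← Module.End.mul_eq_comp, h3]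
    rfl
  refine ⟨C, hCc, fun t ht => ⟨hprod t ht, hAC t ht, ?_⟩⟩
  exact Ring.inverse_unit (⟨A t, C t, hAC t ht, hprod t ht⟩ : (g →L[ℝ] g)ˣ)

variable {h : Type*} [NormedAddCommGroup h] [NormedSpace ℝ h] [FiniteDimensional ℝ h]

lemma pathExt_pathMap (φ : g →ₗ[ℝ] h) (γ : C(Set.Icc (0:ℝ) 1, g)) (t : ℝ) :
    pathExt (pathMap φ γ) t = φ (pathExt γ t) := rfl

lemma transport_natural (B : g →ₗ[ℝ] g →ₗ[ℝ] g) (B' : h →ₗ[ℝ] h →ₗ[ℝ] h)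
    (φ : g →ₗ[ℝ] h) (hφ : ∀ x y : g, φ (B x y) = B' (φ x) (φ y))
    (γ : C(Set.Icc (0:ℝ) 1, g)) : ∀ t ∈ Set.Icc (0:ℝ) 1,
      (transport B' (pathExt (pathMap φ γ)) t).comp (LinearMap.toContinuousLinearMap φ)
        = (LinearMap.toContinuousLinearMap φ).comp (transport B (pathExt γ) t) := by
  set φL := LinearMap.toContinuousLinearMap φ with hφL
  have hA := isTransport_transport B γ
  have hA' := isTransport_transport B' (pathMap φ γ)
  set A := transport B (pathExt γ)
  set A' := transport B' (pathExt (pathMap φ γ))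
  have hkey : ∀ x : g, φL.comp (adL B x) = (adL B' (φ x)).comp φL := by
    intro x
    ext y
    simp only [ContinuousLinearMap.comp_apply, adL, hφL,
      LinearMap.coe_toContinuousLinearMap']
    exact hφ x y
  set M : ℝ → (g →L[ℝ] h) →L[ℝ] (g →L[ℝ] h) :=
    fun t => (ContinuousLinearMap.compL ℝ g h h) (adL B' (φ (pathExt γ t))) with hM
  have hMc : Continuous M :=
    (ContinuousLinearMap.compL ℝ g h h).continuous.comp
      ((continuous_adL B').comp
        ((LinearMap.toContinuousLinearMap φ).continuous.comp (continuous_pathExt γ)))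
  have hNc : Continuous (fun x : g => (ContinuousLinearMap.compL ℝ g h h) (adL B' (φ x))) := by
    exact (ContinuousLinearMap.compL ℝ g h h).continuous.comp
      ((continuous_adL B').comp (LinearMap.toContinuousLinearMap φ).continuous)
  obtain ⟨K, hK⟩ := pathExt_bound
    (fun x => (ContinuousLinearMap.compL ℝ g h h) (adL B' (φ x))) hNc γ
  have hK0 : 0 ≤ K := le_trans (norm_nonneg
    ((ContinuousLinearMap.compL ℝ g h h) (adL B' (φ (pathExt γ 0))))) (hK 0)
  refine linODE_unique01 M hK0 hK (f := fun t => (A' t).comp φL)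
    (h := fun t => φL.comp (A t)) ?_ ?_ ?_
  · intro t ht
    have h1 := (hA'.2.1 t ht).clm_comp (hasDerivWithinAt_const t _ φL)
    have heq : ((adL B' (pathExt (pathMap φ γ) t)).comp (A' t)).comp φL + (A' t).comp (0 : g →L[ℝ] h)
        = M t ((A' t).comp φL) := by
      rw [ContinuousLinearMap.comp_zero, add_zero, hM]
      simp only [ContinuousLinearMap.compL_apply, pathExt_pathMap]
      rw [ContinuousLinearMap.comp_assoc]
    rwa [heq] at h1
  · intro t ht
    have h1 := (hasDerivWithinAt_const t _ φL).clm_comp (hA.2.1 t ht)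
    have heq : ContinuousLinearMap.comp (0 : g →L[ℝ] h) (A t)
        + φL.comp ((adL B (pathExt γ t)).comp (A t)) = M t (φL.comp (A t)) := by
      rw [ContinuousLinearMap.zero_comp, zero_add, ← ContinuousLinearMap.comp_assoc,
        hkey (pathExt γ t), ContinuousLinearMap.comp_assoc, hM]
      simp only [ContinuousLinearMap.compL_apply]
    rwa [heq] at h1
  · show (A' 0).comp φL = φL.comp (A 0)
    rw [hA.1, hA'.1]
    simp [ContinuousLinearMap.one_def]

lemma transport_natural_apply (B : g →ₗ[ℝ] g →ₗ[ℝ] g) (B' : h →ₗ[ℝ] h →ₗ[ℝ] h)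
    (φ : g →ₗ[ℝ] h) (hφ : ∀ x y : g, φ (B x y) = B' (φ x) (φ y))
    (γ : C(Set.Icc (0:ℝ) 1, g)) : ∀ t ∈ Set.Icc (0:ℝ) 1, ∀ x : g,
      transport B' (pathExt (pathMap φ γ)) t (φ x) = φ (transport B (pathExt γ) t x) := by
  intro t ht x
  have h1 := congrArg (fun L : g →L[ℝ] h => L x) (transport_natural B B' φ hφ γ t ht)
  simpa using h1

lemma transport_inv_natural_apply (B : g →ₗ[ℝ] g →ₗ[ℝ] g) (B' : h →ₗ[ℝ] h →ₗ[ℝ] h)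
    (φ : g →ₗ[ℝ] h) (hφ : ∀ x y : g, φ (B x y) = B' (φ x) (φ y))
    (γ : C(Set.Icc (0:ℝ) 1, g)) : ∀ t ∈ Set.Icc (0:ℝ) 1, ∀ x : g,
      Ring.inverse (transport B' (pathExt (pathMap φ γ)) t) (φ x)
        = φ (Ring.inverse (transport B (pathExt γ) t) x) := by
  obtain ⟨C, hCc, hC⟩ := transport_inv B γ
  obtain ⟨C', hC'c, hC'⟩ := transport_inv B' (pathMap φ γ)
  intro t ht x
  rw [(hC' t ht).2.2, (hC t ht).2.2]
  have hACx : transport B (pathExt γ) t (C t x) = x := by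
    have h1 := congrArg (fun L : g →L[ℝ] g => L x) (hC t ht).2.1
    simpa using h1
  calc C' t (φ x) = C' t (φ (transport B (pathExt γ) t (C t x))) := by rw [hACx]
    _ = C' t (transport B' (pathExt (pathMap φ γ)) t (φ (C t x))) := by
        rw [transport_natural_apply B B' φ hφ γ t ht (C t x)]
    _ = φ (C t x) := by
        have h1 := congrArg (fun L : h →L[ℝ] h => L (φ (C t x))) (hC' t ht).1
        simpa using h1

lemma mapsInPathZero (B : g →ₗ[ℝ] g →ₗ[ℝ] g) (B' : h →ₗ[ℝ] h →ₗ[ℝ] h)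
    (φ : g →ₗ[ℝ] h) (hφ : ∀ x y : g, φ (B x y) = B' (φ x) (φ y)) :
    ∀ γ : C(Set.Icc (0:ℝ) 1, g), InPathZero B γ → InPathZero B' (pathMap φ γ) := by
  rintro γ ⟨Γ, Γ', hd, hc, h0, h1, hint⟩
  set φL := LinearMap.toContinuousLinearMap φ with hφLdef
  set L : C(Set.Icc (0:ℝ) 1, g) →L[ℝ] C(Set.Icc (0:ℝ) 1, h) :=
    ContinuousLinearMap.compLeftContinuous ℝ _ φL with hLdef
  have hLap : ∀ δ : C(Set.Icc (0:ℝ) 1, g), pathMap φ δ = L δ := by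
    intro δ
    ext t
    simp [hLdef, pathMap, hφLdef]
  refine ⟨fun s => pathMap φ (Γ s), fun s => pathMap φ (Γ' s), ?_, ?_, ?_, ?_, ?_⟩
  · intro s hs
    simp only [hLap]
    exact (L.hasFDerivAt (x := Γ s)).comp_hasDerivWithinAt s (hd s hs)
  · simp only [hLap]
    exact L.continuous.comp_continuousOn hc
  · show pathMap φ (Γ 0) = 0
    rw [h0]
    ext t
    simp [pathMap]
  · show pathMap φ (Γ 1) = pathMap φ γ
    rw [h1]
  · intro s hs
    obtain ⟨C, hCc, hC⟩ := transport_inv B (Γ s)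
    set f : ℝ → g := fun t =>
      Ring.inverse (transport B (pathExt (Γ s)) t) (pathExt (Γ' s) t) with hfdef
    have hfc : ContinuousOn f (Set.Icc (0:ℝ) 1) := by
      apply ContinuousOn.congr (hCc.clm_apply (continuous_pathExt (Γ' s)).continuousOn)
      intro t ht
      simp [hfdef, (hC t ht).2.2]
    have hfi : IntervalIntegrable f MeasureTheory.volume 0 1 := by
      apply ContinuousOn.intervalIntegrable
      rwa [Set.uIcc_of_le zero_le_one]
    have heq : Set.EqOn
        (fun t => Ring.inverse (transport B' (pathExt (pathMap φ (Γ s))) t)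
          (pathExt (pathMap φ (Γ' s)) t))
        (fun t => φL (f t)) (Set.uIcc (0:ℝ) 1) := by
      intro t ht
      rw [Set.uIcc_of_le zero_le_one] at ht
      show Ring.inverse (transport B' (pathExt (pathMap φ (Γ s))) t)
          (pathExt (pathMap φ (Γ' s)) t) = φL (f t)
      rw [pathExt_pathMap φ (Γ' s) t,
        transport_inv_natural_apply B B' φ hφ (Γ s) t ht (pathExt (Γ' s) t)]
      simp [hφLdef, hfdef]
    rw [intervalIntegral.integral_congr heq,
      ContinuousLinearMap.intervalIntegral_comp_comm φL hfi]
    rw [show (∫ t in (0:ℝ)..1, f t) = 0 from hint s hs]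
    simp

end Transport

/-- A homomorphism `φ : g → h` of finite-dimensional real Lie algebras induces a
group homomorphism `P(g) → P(h)`, `γ ↦ φ∘γ`, which maps `P(g)₀` into `P(h)₀` and
therefore descends to a group homomorphism `P(g)/P(g)₀ → P(h)/P(h)₀`. -/
theorem pathMap_descends {g h : Type*}
    [NormedAddCommGroup g] [NormedSpace ℝ g] [FiniteDimensional ℝ g]
    [NormedAddCommGroup h] [NormedSpace ℝ h] [FiniteDimensional ℝ h]
    (B : g →ₗ[ℝ] g →ₗ[ℝ] g) (hB : IsLieBracket B)
    (B' : h →ₗ[ℝ] h →ₗ[ℝ] h) (hB' : IsLieBracket B')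
    (φ : g →ₗ[ℝ] h) (hφ : ∀ x y : g, φ (B x y) = B' (φ x) (φ y)) :
    -- `γ ↦ φ∘γ` maps `P(g)₀` into `P(h)₀` ...
    (∀ γ : C(Set.Icc (0:ℝ) 1, g), InPathZero B γ → InPathZero B' (pathMap φ γ)) ∧
    -- ... and therefore descends to a group homomorphism of the quotients
    ∃ F : Quot (pathRel B) → Quot (pathRel B'),
      (∀ γ : C(Set.Icc (0:ℝ) 1, g),
        F (Quot.mk (pathRel B) γ) = Quot.mk (pathRel B') (pathMap φ γ)) ∧
      (∀ (mulg : Quot (pathRel B) → Quot (pathRel B) → Quot (pathRel B))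
         (mulh : Quot (pathRel B') → Quot (pathRel B') → Quot (pathRel B')),
        (∀ γ δ m : C(Set.Icc (0:ℝ) 1, g), (∀ t, m t = pathMul B γ δ t) →
          mulg (Quot.mk (pathRel B) γ) (Quot.mk (pathRel B) δ) = Quot.mk (pathRel B) m) →
        (∀ γ δ m : C(Set.Icc (0:ℝ) 1, h), (∀ t, m t = pathMul B' γ δ t) →
          mulh (Quot.mk (pathRel B') γ) (Quot.mk (pathRel B') δ) = Quot.mk (pathRel B') m) →
        ∀ a b : Quot (pathRel B), F (mulg a b) = mulh (F a) (F b)) := by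
  classical
  have part1 := mapsInPathZero B B' φ hφ
  refine ⟨part1, ?_⟩
  have hrel : ∀ γ δ : C(Set.Icc (0:ℝ) 1, g), pathRel B γ δ →
      pathRel B' (pathMap φ γ) (pathMap φ δ) := by
    rintro γ δ ⟨ι, m, hι, hm, hz⟩
    refine ⟨pathMap φ ι, pathMap φ m, ?_, ?_, part1 m hz⟩
    · intro t
      show φ (ι t) = pathInv B' (pathMap φ δ) t
      rw [hι t]
      simp only [pathInv, map_neg]
      rw [show (pathMap φ δ) t = φ (δ t) from rfl,
        transport_inv_natural_apply B B' φ hφ δ ↑t t.2 (δ t)]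
    · intro t
      show φ (m t) = pathMul B' (pathMap φ γ) (pathMap φ ι) t
      rw [hm t]
      simp only [pathMul, map_add]
      rw [show (pathMap φ γ) t = φ (γ t) from rfl,
        show (pathMap φ ι) t = φ (ι t) from rfl,
        transport_natural_apply B B' φ hφ γ ↑t t.2 (ι t)]
  refine ⟨Quot.lift (fun γ => Quot.mk (pathRel B') (pathMap φ γ))
    (fun γ δ hγδ => Quot.sound (hrel γ δ hγδ)), fun γ => rfl, ?_⟩
  intro mulg mulh hg hh a b
  induction a using Quot.ind with
  | _ γ =>
  induction b using Quot.ind with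
  | _ δ =>
  have hAc : ContinuousOn (transport B (pathExt γ)) (Set.Icc (0:ℝ) 1) :=
    fun t ht => ((isTransport_transport B γ).2.1 t ht).continuousWithinAt
  have hmc : Continuous (fun t : Set.Icc (0:ℝ) 1 =>
      γ t + transport B (pathExt γ) ↑t (δ t)) := by
    apply γ.continuous.add
    apply Continuous.clm_apply ?_ δ.continuous
    exact hAc.comp_continuous continuous_subtype_val (fun t => t.2)
  set m : C(Set.Icc (0:ℝ) 1, g) := ⟨_, hmc⟩ with hmdef
  have hmul : ∀ t, m t = pathMul B γ δ t := fun t => rfl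
  rw [hg γ δ m hmul]
  show Quot.mk (pathRel B') (pathMap φ m)
    = mulh (Quot.mk (pathRel B') (pathMap φ γ)) (Quot.mk (pathRel B') (pathMap φ δ))
  rw [hh (pathMap φ γ) (pathMap φ δ) (pathMap φ m) ?_]
  intro t
  show φ (m t) = pathMul B' (pathMap φ γ) (pathMap φ δ) t
  rw [hmul t]
  simp only [pathMul, map_add]
  rw [show (pathMap φ γ) t = φ (γ t) from rfl,
    show (pathMap φ δ) t = φ (δ t) from rfl,
    transport_natural_apply B B' φ hφ γ ↑t t.2 (δ t)]
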